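/- arXiv:1604.08448 — 3 statements merged into one kernel-verified Lean document; each statement's English description precedes it below -/
import Mathlib

section
/- Suppose x is locally optimal with respect to single flips, i.e., Δz̃_j(x) ≥ 0 for all j ∈ N. If x_{j₁} = x_{j₂} = 1 for distinct j₁, j₂, then Δz̃_{j₁,j₂}(x) = Δz̃_{j₁}(x) + Δz̃_{j₂}(x) + Σ_{i ∈ S_{j₁}∩S_{j₂}∩(M_L∪M_E), s_i(x)=b_i+1} w̃_i⁺ + Σ_{i ∈ S_{j₁}∩S_{j₂}∩(M_G∪M_E), s_i(x)=b_i+1} w̃_i⁻, and in particular Δz̃_{j₁,j₂}(x) ≥ 0. -/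
open scoped Classical BigOperators

noncomputable def sLHS {M N : Type*} [Fintype N] (a : M → N → ℝ) (x : N → ℝ) (i : M) : ℝ :=
  ∑ j, a i j * x j

noncomputable def penObj {M N : Type*} [Fintype M] [Fintype N]
    (ML MG ME : Finset M) (a : M → N → ℝ) (b : M → ℕ) (c : N → ℝ)
    (wp wm : M → ℝ) (x : N → ℝ) : ℝ :=
  (∑ j, c j * x j)
    + ∑ i ∈ ML ∪ ME, wp i * max (sLHS a x i - (b i : ℝ)) 0
    + ∑ i ∈ MG ∪ ME, wm i * max ((b i : ℝ) - sLHS a x i) 0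

noncomputable def flipVar {N : Type*} [DecidableEq N] (x : N → ℝ) (j : N) : N → ℝ :=
  Function.update x j (1 - x j)

noncomputable def Sset {M N : Type*} [Fintype M] (a : M → N → ℝ) (j : N) : Finset M :=
  Finset.univ.filter (fun i => a i j = 1)

/- auxiliary lemmas -/

lemma zkeyp (k m : ℤ) : (max (k-2-m) 0 + max (k-m) 0 - max (k-1-m) 0 - max (k-1-m) 0 : ℤ)
    = if k = m+1 then 1 else 0 := by
  split_ifs with h <;> omega

lemma zkeym (k m : ℤ) : (max (m-k+2) 0 + max (m-k) 0 - max (m-k+1) 0 - max (m-k+1) 0 : ℤ)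
    = if k = m+1 then 1 else 0 := by
  split_ifs with h <;> omega

lemma rkeyp (k m : ℤ) : max ((k:ℝ)-2-m) 0 + max ((k:ℝ)-m) 0 - max ((k:ℝ)-1-m) 0 - max ((k:ℝ)-1-m) 0
    = if (k:ℝ) = m+1 then 1 else 0 := by
  have h := zkeyp k m
  split_ifs with hc
  · have hk : k = m+1 := by exact_mod_cast hc
    rw [if_pos hk] at h; exact_mod_cast h
  · have hk : ¬ k = m+1 := by exact_mod_cast hc
    rw [if_neg hk] at h; exact_mod_cast h

lemma rkeym (k m : ℤ) : max ((m:ℝ)-k+2) 0 + max ((m:ℝ)-k) 0 - max ((m:ℝ)-k+1) 0 - max ((m:ℝ)-k+1) 0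
    = if (k:ℝ) = m+1 then 1 else 0 := by
  have h := zkeym k m
  split_ifs with hc
  · have hk : k = m+1 := by exact_mod_cast hc
    rw [if_pos hk] at h; exact_mod_cast h
  · have hk : ¬ k = m+1 := by exact_mod_cast hc
    rw [if_neg hk] at h; exact_mod_cast h

lemma indicp (s : ℝ) (hs : ∃ k : ℤ, s = k) (m : ℕ) (a1 a2 : ℝ)
    (h1 : a1 = 0 ∨ a1 = 1) (h2 : a2 = 0 ∨ a2 = 1) :
    max (s - a1 - a2 - m) 0 + max (s - m) 0 - max (s - a1 - m) 0 - max (s - a2 - m) 0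
      = if a1 = 1 ∧ a2 = 1 ∧ s = (m:ℝ) + 1 then 1 else 0 := by
  obtain ⟨k, rfl⟩ := hs
  rcases h1 with rfl | rfl <;> rcases h2 with rfl | rfl
  · norm_num
  · norm_num [show (k:ℝ) - 0 - 1 - m = (k:ℝ) - 1 - m from by ring]
  · norm_num [show (k:ℝ) - 1 - 0 - m = (k:ℝ) - 1 - m from by ring]
  · have h := rkeyp k (m:ℤ)
    push_cast at h
    rw [show (k:ℝ) - 1 - 1 - m = (k:ℝ) - 2 - m from by ring]
    simp only [true_and, and_self, eq_self_iff_true]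
    exact h

lemma indicm (s : ℝ) (hs : ∃ k : ℤ, s = k) (m : ℕ) (a1 a2 : ℝ)
    (h1 : a1 = 0 ∨ a1 = 1) (h2 : a2 = 0 ∨ a2 = 1) :
    max ((m:ℝ) - (s - a1 - a2)) 0 + max ((m:ℝ) - s) 0
      - max ((m:ℝ) - (s - a1)) 0 - max ((m:ℝ) - (s - a2)) 0
      = if a1 = 1 ∧ a2 = 1 ∧ s = (m:ℝ) + 1 then 1 else 0 := by
  obtain ⟨k, rfl⟩ := hs
  rcases h1 with rfl | rfl <;> rcases h2 with rfl | rfl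
  · norm_num
  · norm_num [show (m:ℝ) - ((k:ℝ) - 0 - 1) = (m:ℝ) - ((k:ℝ) - 1) from by ring]
  · norm_num [show (m:ℝ) - ((k:ℝ) - 1 - 0) = (m:ℝ) - ((k:ℝ) - 1) from by ring]
  · have h := rkeym k (m:ℤ)
    push_cast at h
    rw [show (m:ℝ) - ((k:ℝ) - 1 - 1) = (m:ℝ) - k + 2 from by ring,
      show (m:ℝ) - ((k:ℝ) - 1) = (m:ℝ) - k + 1 from by ring]
    simp only [true_and, and_self, eq_self_iff_true]
    exact h

lemma sum_update_mul {N : Type*} [Fintype N] [DecidableEq N] (f x : N → ℝ) (j : N) (v : ℝ) :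
    ∑ j', f j' * Function.update x j v j' = (∑ j', f j' * x j') + f j * (v - x j) := by
  rw [Finset.sum_eq_sum_sdiff_singleton_add (Finset.mem_univ j)
      (fun j' => f j' * Function.update x j v j'),
    Finset.sum_eq_sum_sdiff_singleton_add (Finset.mem_univ j) (fun j' => f j' * x j')]
  have h : ∀ j' ∈ Finset.univ \ {j}, f j' * Function.update x j v j' = f j' * x j' := by
    intro j' hj'
    have hne : j' ≠ j := by simpa using (Finset.mem_sdiff.mp hj').2
    rw [Function.update_of_ne hne]
  rw [Finset.sum_congr rfl h, Function.update_self]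
  ring

lemma sum_flip_mul {N : Type*} [Fintype N] [DecidableEq N] (f x : N → ℝ) (j : N) (hj : x j = 1) :
    ∑ j', f j' * flipVar x j j' = (∑ j', f j' * x j') - f j := by
  rw [flipVar, sum_update_mul, hj]; ring

lemma sLHS_flip {M N : Type*} [Fintype N] [DecidableEq N] (a : M → N → ℝ) (x : N → ℝ)
    (j : N) (hj : x j = 1) (i : M) :
    sLHS a (flipVar x j) i = sLHS a x i - a i j := by
  rw [sLHS, sLHS, sum_flip_mul _ _ _ hj]

theorem stmt_5 {M N : Type*} [Fintype M] [Fintype N] [DecidableEq N]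
    (ML MG ME : Finset M) (a : M → N → ℝ) (b : M → ℕ) (c : N → ℝ)
    (wp wm : M → ℝ)
    (ha : ∀ i j, a i j = 0 ∨ a i j = 1)
    (hwp : ∀ i, 0 ≤ wp i) (hwm : ∀ i, 0 ≤ wm i)
    (x : N → ℝ) (hx : ∀ j', x j' = 0 ∨ x j' = 1)
    (hlocal : ∀ j, 0 ≤ penObj ML MG ME a b c wp wm (flipVar x j) - penObj ML MG ME a b c wp wm x)
    (j₁ j₂ : N) (hne : j₁ ≠ j₂) (h1 : x j₁ = 1) (h2 : x j₂ = 1) :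
    (penObj ML MG ME a b c wp wm (flipVar (flipVar x j₁) j₂) - penObj ML MG ME a b c wp wm x
      = (penObj ML MG ME a b c wp wm (flipVar x j₁) - penObj ML MG ME a b c wp wm x)
        + (penObj ML MG ME a b c wp wm (flipVar x j₂) - penObj ML MG ME a b c wp wm x)
        + ∑ i ∈ (Sset a j₁ ∩ Sset a j₂ ∩ (ML ∪ ME)).filter
            (fun i => sLHS a x i = (b i : ℝ) + 1), wp i
        + ∑ i ∈ (Sset a j₁ ∩ Sset a j₂ ∩ (MG ∪ ME)).filter
            (fun i => sLHS a x i = (b i : ℝ) + 1), wm i) ∧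
    0 ≤ penObj ML MG ME a b c wp wm (flipVar (flipVar x j₁) j₂) - penObj ML MG ME a b c wp wm x := by
  have hint : ∀ i, ∃ k : ℤ, sLHS a x i = (k:ℝ) := by
    intro i
    have h : ∀ j, ∃ kj : ℤ, a i j * x j = (kj:ℝ) := by
      intro j
      rcases ha i j with h | h
      · exact ⟨0, by simp [h]⟩
      · rcases hx j with h' | h'
        · exact ⟨0, by simp [h']⟩
        · exact ⟨1, by simp [h, h']⟩
    choose g hg using h
    refine ⟨∑ j, g j, ?_⟩
    rw [sLHS]; push_cast
    exact Finset.sum_congr rfl fun j _ => hg j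
  have hy1j2 : flipVar x j₁ j₂ = 1 := by
    rw [flipVar, Function.update_of_ne (Ne.symm hne)]; exact h2
  have hs1 : ∀ i, sLHS a (flipVar x j₁) i = sLHS a x i - a i j₁ := sLHS_flip a x j₁ h1
  have hs2 : ∀ i, sLHS a (flipVar x j₂) i = sLHS a x i - a i j₂ := sLHS_flip a x j₂ h2
  have hs12 : ∀ i, sLHS a (flipVar (flipVar x j₁) j₂) i = sLHS a x i - a i j₁ - a i j₂ := by
    intro i
    rw [sLHS_flip a _ j₂ hy1j2 i, hs1 i]
  have hc1 : (∑ j', c j' * flipVar x j₁ j') = (∑ j', c j' * x j') - c j₁ :=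
    sum_flip_mul c x j₁ h1
  have hc2 : (∑ j', c j' * flipVar x j₂ j') = (∑ j', c j' * x j') - c j₂ :=
    sum_flip_mul c x j₂ h2
  have hc12 : (∑ j', c j' * flipVar (flipVar x j₁) j₂ j') = (∑ j', c j' * x j') - c j₁ - c j₂ := by
    rw [sum_flip_mul c _ j₂ hy1j2, hc1]
  have keyA : (∑ i ∈ ML ∪ ME, wp i * max (sLHS a x i - a i j₁ - a i j₂ - (b i:ℝ)) 0)
      + (∑ i ∈ ML ∪ ME, wp i * max (sLHS a x i - (b i:ℝ)) 0)
      - (∑ i ∈ ML ∪ ME, wp i * max (sLHS a x i - a i j₁ - (b i:ℝ)) 0)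
      - (∑ i ∈ ML ∪ ME, wp i * max (sLHS a x i - a i j₂ - (b i:ℝ)) 0)
      = ∑ i ∈ (Sset a j₁ ∩ Sset a j₂ ∩ (ML ∪ ME)).filter
          (fun i => sLHS a x i = (b i : ℝ) + 1), wp i := by
    have hset : (Sset a j₁ ∩ Sset a j₂ ∩ (ML ∪ ME)).filter (fun i => sLHS a x i = (b i : ℝ) + 1)
        = (ML ∪ ME).filter (fun i => a i j₁ = 1 ∧ a i j₂ = 1 ∧ sLHS a x i = (b i:ℝ) + 1) := by
      ext i
      simp only [Sset, Finset.mem_filter, Finset.mem_inter, Finset.mem_univ, true_and]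
      tauto
    rw [hset, Finset.sum_filter, ← Finset.sum_add_distrib, ← Finset.sum_sub_distrib,
      ← Finset.sum_sub_distrib]
    refine Finset.sum_congr rfl fun i _ => ?_
    have hii := indicp (sLHS a x i) (hint i) (b i) (a i j₁) (a i j₂) (ha i j₁) (ha i j₂)
    calc wp i * max (sLHS a x i - a i j₁ - a i j₂ - (b i:ℝ)) 0
          + wp i * max (sLHS a x i - (b i:ℝ)) 0
          - wp i * max (sLHS a x i - a i j₁ - (b i:ℝ)) 0
          - wp i * max (sLHS a x i - a i j₂ - (b i:ℝ)) 0
        = wp i * (max (sLHS a x i - a i j₁ - a i j₂ - (b i:ℝ)) 0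
            + max (sLHS a x i - (b i:ℝ)) 0
            - max (sLHS a x i - a i j₁ - (b i:ℝ)) 0
            - max (sLHS a x i - a i j₂ - (b i:ℝ)) 0) := by ring
      _ = wp i * (if a i j₁ = 1 ∧ a i j₂ = 1 ∧ sLHS a x i = (b i:ℝ) + 1 then 1 else 0) := by
            rw [hii]
      _ = (if a i j₁ = 1 ∧ a i j₂ = 1 ∧ sLHS a x i = (b i:ℝ) + 1 then wp i else 0) := by
            split_ifs <;> ring
  have keyB : (∑ i ∈ MG ∪ ME, wm i * max ((b i:ℝ) - (sLHS a x i - a i j₁ - a i j₂)) 0)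
      + (∑ i ∈ MG ∪ ME, wm i * max ((b i:ℝ) - sLHS a x i) 0)
      - (∑ i ∈ MG ∪ ME, wm i * max ((b i:ℝ) - (sLHS a x i - a i j₁)) 0)
      - (∑ i ∈ MG ∪ ME, wm i * max ((b i:ℝ) - (sLHS a x i - a i j₂)) 0)
      = ∑ i ∈ (Sset a j₁ ∩ Sset a j₂ ∩ (MG ∪ ME)).filter
          (fun i => sLHS a x i = (b i : ℝ) + 1), wm i := by
    have hset : (Sset a j₁ ∩ Sset a j₂ ∩ (MG ∪ ME)).filter (fun i => sLHS a x i = (b i : ℝ) + 1)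
        = (MG ∪ ME).filter (fun i => a i j₁ = 1 ∧ a i j₂ = 1 ∧ sLHS a x i = (b i:ℝ) + 1) := by
      ext i
      simp only [Sset, Finset.mem_filter, Finset.mem_inter, Finset.mem_univ, true_and]
      tauto
    rw [hset, Finset.sum_filter, ← Finset.sum_add_distrib, ← Finset.sum_sub_distrib,
      ← Finset.sum_sub_distrib]
    refine Finset.sum_congr rfl fun i _ => ?_
    have hii := indicm (sLHS a x i) (hint i) (b i) (a i j₁) (a i j₂) (ha i j₁) (ha i j₂)
    calc wm i * max ((b i:ℝ) - (sLHS a x i - a i j₁ - a i j₂)) 0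
          + wm i * max ((b i:ℝ) - sLHS a x i) 0
          - wm i * max ((b i:ℝ) - (sLHS a x i - a i j₁)) 0
          - wm i * max ((b i:ℝ) - (sLHS a x i - a i j₂)) 0
        = wm i * (max ((b i:ℝ) - (sLHS a x i - a i j₁ - a i j₂)) 0
            + max ((b i:ℝ) - sLHS a x i) 0
            - max ((b i:ℝ) - (sLHS a x i - a i j₁)) 0
            - max ((b i:ℝ) - (sLHS a x i - a i j₂)) 0) := by ring
      _ = wm i * (if a i j₁ = 1 ∧ a i j₂ = 1 ∧ sLHS a x i = (b i:ℝ) + 1 then 1 else 0) := by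
            rw [hii]
      _ = (if a i j₁ = 1 ∧ a i j₂ = 1 ∧ sLHS a x i = (b i:ℝ) + 1 then wm i else 0) := by
            split_ifs <;> ring
  have hmain : penObj ML MG ME a b c wp wm (flipVar (flipVar x j₁) j₂)
        - penObj ML MG ME a b c wp wm x
      = (penObj ML MG ME a b c wp wm (flipVar x j₁) - penObj ML MG ME a b c wp wm x)
        + (penObj ML MG ME a b c wp wm (flipVar x j₂) - penObj ML MG ME a b c wp wm x)
        + ∑ i ∈ (Sset a j₁ ∩ Sset a j₂ ∩ (ML ∪ ME)).filter
            (fun i => sLHS a x i = (b i : ℝ) + 1), wp i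
        + ∑ i ∈ (Sset a j₁ ∩ Sset a j₂ ∩ (MG ∪ ME)).filter
            (fun i => sLHS a x i = (b i : ℝ) + 1), wm i := by
    simp only [penObj, hs12, hs1, hs2, hc12, hc1, hc2]
    linarith [keyA, keyB]
  refine ⟨hmain, ?_⟩
  rw [hmain]
  have hA : 0 ≤ ∑ i ∈ (Sset a j₁ ∩ Sset a j₂ ∩ (ML ∪ ME)).filter
      (fun i => sLHS a x i = (b i : ℝ) + 1), wp i :=
    Finset.sum_nonneg fun i _ => hwp i
  have hB : 0 ≤ ∑ i ∈ (Sset a j₁ ∩ Sset a j₂ ∩ (MG ∪ ME)).filter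
      (fun i => sLHS a x i = (b i : ℝ) + 1), wm i :=
    Finset.sum_nonneg fun i _ => hwm i
  have := hlocal j₁
  have := hlocal j₂
  linarith
end

section
/- For x_{j₁} = 1 and x_{j₂} = 0 with j₁ ≠ j₂, the change from simultaneously flipping both satisfies Δz̃_{j₁,j₂}(x) = Δz̃_{j₁}^↓(x) + Δz̃_{j₂}^↑(x) − Σ_{i ∈ S̄(x)∩(M_L∪M_E)} w̃_i⁺ − Σ_{i ∈ S̄(x)∩(M_G∪M_E)} w̃_i⁻, where S̄(x) = {i ∈ S_{j₁} ∩ S_{j₂} : s_i(x) = b_i}. -/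
open scoped Classical BigOperators

lemma sum_mul_update {N : Type*} [Fintype N] [DecidableEq N]
    (c x : N → ℝ) (j : N) (v : ℝ) :
    ∑ j', c j' * Function.update x j v j'
      = (∑ j', c j' * x j') - c j * x j + c j * v := by
  have h : (fun j' => c j' * Function.update x j v j')
      = Function.update (fun j' => c j' * x j') j (c j * v) := by
    funext j'
    by_cases hj : j' = j
    · subst hj; simp
    · simp [Function.update_of_ne hj]
  rw [h, Finset.sum_update_of_mem (Finset.mem_univ j)]
  rw [Finset.sum_eq_sum_sdiff_singleton_add (Finset.mem_univ j) (fun j' => c j' * x j')]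
  ring

lemma key (t e1 e2 w : ℝ) (m : ℤ) (ht : t = (m : ℝ))
    (h1 : e1 = 0 ∨ e1 = 1) (h2 : e2 = 0 ∨ e2 = 1)
    (C : Prop) [Decidable C] (hC : C ↔ (e1 = 1 ∧ e2 = 1 ∧ t = 0)) :
    w * max (t - e1 + e2) 0
      = w * max (t - e1) 0 + w * max (t + e2) 0 - w * max t 0
        - (if C then w else 0) := by
  rcases h1 with h1 | h1 <;> rcases h2 with h2 | h2 <;> subst h1 <;> subst h2
  · have : ¬ C := by rw [hC]; norm_num
    simp [this]
  · have : ¬ C := by rw [hC]; norm_num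
    simp [this]
  · have : ¬ C := by rw [hC]; norm_num
    simp [this]
  · subst ht
    rcases lt_trichotomy m 0 with h | h | h
    · have hm : (m : ℝ) ≤ -1 := by exact_mod_cast (by omega : m ≤ -1)
      have hC' : ¬ C := by
        rw [hC]; push_neg; intro _ _
        exact_mod_cast (by omega : m ≠ 0)
      rw [max_eq_right (by linarith : (m:ℝ) - 1 + 1 ≤ 0),
          max_eq_right (by linarith : (m:ℝ) - 1 ≤ 0),
          max_eq_right (by linarith : (m:ℝ) + 1 ≤ 0),
          max_eq_right (by linarith : (m:ℝ) ≤ 0)]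
      simp [hC']
    · subst h
      have hC' : C := by rw [hC]; norm_num
      simp [hC']
    · have hm : (1 : ℝ) ≤ (m : ℝ) := by exact_mod_cast h
      have hC' : ¬ C := by
        rw [hC]; push_neg; intro _ _
        exact_mod_cast (by omega : m ≠ 0)
      rw [max_eq_left (by linarith : (0:ℝ) ≤ (m:ℝ) - 1 + 1),
          max_eq_left (by linarith : (0:ℝ) ≤ (m:ℝ) - 1),
          max_eq_left (by linarith : (0:ℝ) ≤ (m:ℝ) + 1),
          max_eq_left (by linarith : (0:ℝ) ≤ (m:ℝ))]
      simp [hC']; ring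

theorem stmt_8 {M N : Type*} [Fintype M] [Fintype N] [DecidableEq N]
    (ML MG ME : Finset M) (a : M → N → ℝ) (b : M → ℕ) (c : N → ℝ)
    (wp wm : M → ℝ)
    (ha : ∀ i j, a i j = 0 ∨ a i j = 1)
    (hwp : ∀ i, 0 ≤ wp i) (hwm : ∀ i, 0 ≤ wm i)
    (x : N → ℝ) (hx : ∀ j', x j' = 0 ∨ x j' = 1)
    (j₁ j₂ : N) (hne : j₁ ≠ j₂) (h1 : x j₁ = 1) (h2 : x j₂ = 0) :
    penObj ML MG ME a b c wp wm (flipVar (flipVar x j₁) j₂) - penObj ML MG ME a b c wp wm x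
      = (penObj ML MG ME a b c wp wm (flipVar x j₁) - penObj ML MG ME a b c wp wm x)
        + (penObj ML MG ME a b c wp wm (flipVar x j₂) - penObj ML MG ME a b c wp wm x)
        - ∑ i ∈ ((Sset a j₁ ∩ Sset a j₂).filter (fun i => sLHS a x i = (b i : ℝ)))
            ∩ (ML ∪ ME), wp i
        - ∑ i ∈ ((Sset a j₁ ∩ Sset a j₂).filter (fun i => sLHS a x i = (b i : ℝ)))
            ∩ (MG ∪ ME), wm i := by
  set Sbar := ((Sset a j₁ ∩ Sset a j₂).filter (fun i => sLHS a x i = (b i : ℝ))) with hSbar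
  -- integrality
  have hint : ∀ i, ∃ m : ℤ, sLHS a x i = (m : ℝ) := by
    intro i
    refine ⟨∑ j, if a i j * x j = 1 then (1:ℤ) else 0, ?_⟩
    unfold sLHS
    push_cast
    refine Finset.sum_congr rfl (fun j _ => ?_)
    rcases ha i j with h | h <;> rcases hx j with h' | h' <;> simp [h, h']
  -- membership in Sbar
  have hmem : ∀ i, i ∈ Sbar ↔ (a i j₁ = 1 ∧ a i j₂ = 1 ∧ sLHS a x i - (b i : ℝ) = 0) := by
    intro i
    simp only [hSbar, Finset.mem_filter, Finset.mem_inter, Sset, Finset.mem_univ, true_and,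
      sub_eq_zero]
    tauto
  -- flip values of sLHS
  have hs1 : ∀ i, sLHS a (flipVar x j₁) i = sLHS a x i - a i j₁ := by
    intro i
    unfold sLHS flipVar
    rw [sum_mul_update]
    rw [h1]; ring
  have hs2 : ∀ i, sLHS a (flipVar x j₂) i = sLHS a x i + a i j₂ := by
    intro i
    unfold sLHS flipVar
    rw [sum_mul_update]
    rw [h2]; ring
  have hx12 : flipVar x j₁ j₂ = x j₂ := by
    unfold flipVar; rw [Function.update_of_ne (Ne.symm hne)]
  have hs12 : ∀ i, sLHS a (flipVar (flipVar x j₁) j₂) i = sLHS a x i - a i j₁ + a i j₂ := by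
    intro i
    unfold sLHS
    rw [show flipVar (flipVar x j₁) j₂
        = Function.update (flipVar x j₁) j₂ (1 - flipVar x j₁ j₂) from rfl,
      sum_mul_update, hx12, h2]
    have h := hs1 i
    unfold sLHS at h
    rw [h]; ring
  -- flip values of c-sum
  have hc1 : ∑ j, c j * (flipVar x j₁) j = (∑ j, c j * x j) - c j₁ := by
    unfold flipVar; rw [sum_mul_update, h1]; ring
  have hc2 : ∑ j, c j * (flipVar x j₂) j = (∑ j, c j * x j) + c j₂ := by
    unfold flipVar; rw [sum_mul_update, h2]; ring
  have hc12 : ∑ j, c j * (flipVar (flipVar x j₁) j₂) j = (∑ j, c j * x j) - c j₁ + c j₂ := by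
    rw [show flipVar (flipVar x j₁) j₂
        = Function.update (flipVar x j₁) j₂ (1 - flipVar x j₁ j₂) from rfl,
      sum_mul_update, hc1, hx12, h2]; ring
  -- rewrite Sbar ∩ · sums as ite sums
  have hW : ∀ (t : Finset M) (w : M → ℝ),
      ∑ i ∈ Sbar ∩ t, w i = ∑ i ∈ t, if i ∈ Sbar then w i else 0 := by
    intro t w
    rw [Finset.inter_comm, ← Finset.filter_mem_eq_inter, Finset.sum_filter]
  -- key sum identities
  have Hp : ∑ i ∈ ML ∪ ME, wp i * max (sLHS a x i - a i j₁ + a i j₂ - (b i : ℝ)) 0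
      = (∑ i ∈ ML ∪ ME, wp i * max (sLHS a x i - a i j₁ - (b i : ℝ)) 0)
        + (∑ i ∈ ML ∪ ME, wp i * max (sLHS a x i + a i j₂ - (b i : ℝ)) 0)
        - (∑ i ∈ ML ∪ ME, wp i * max (sLHS a x i - (b i : ℝ)) 0)
        - ∑ i ∈ Sbar ∩ (ML ∪ ME), wp i := by
    rw [hW]
    rw [← Finset.sum_add_distrib, ← Finset.sum_sub_distrib, ← Finset.sum_sub_distrib]
    refine Finset.sum_congr rfl (fun i _ => ?_)
    obtain ⟨m, hm⟩ := hint i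
    have hk := key (sLHS a x i - (b i : ℝ)) (a i j₁) (a i j₂) (wp i) (m - b i)
      (by push_cast; rw [hm]) (ha i j₁) (ha i j₂) (i ∈ Sbar) (hmem i)
    have e1 : sLHS a x i - a i j₁ + a i j₂ - (b i : ℝ)
        = sLHS a x i - (b i : ℝ) - a i j₁ + a i j₂ := by ring
    have e2 : sLHS a x i - a i j₁ - (b i : ℝ) = sLHS a x i - (b i : ℝ) - a i j₁ := by ring
    have e3 : sLHS a x i + a i j₂ - (b i : ℝ) = sLHS a x i - (b i : ℝ) + a i j₂ := by ring
    rw [e1, e2, e3, hk]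
  have Hm : ∑ i ∈ MG ∪ ME, wm i * max ((b i : ℝ) - (sLHS a x i - a i j₁ + a i j₂)) 0
      = (∑ i ∈ MG ∪ ME, wm i * max ((b i : ℝ) - (sLHS a x i - a i j₁)) 0)
        + (∑ i ∈ MG ∪ ME, wm i * max ((b i : ℝ) - (sLHS a x i + a i j₂)) 0)
        - (∑ i ∈ MG ∪ ME, wm i * max ((b i : ℝ) - sLHS a x i) 0)
        - ∑ i ∈ Sbar ∩ (MG ∪ ME), wm i := by
    rw [hW]
    rw [← Finset.sum_add_distrib, ← Finset.sum_sub_distrib, ← Finset.sum_sub_distrib]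
    refine Finset.sum_congr rfl (fun i _ => ?_)
    obtain ⟨m, hm⟩ := hint i
    have hk := key ((b i : ℝ) - sLHS a x i) (a i j₂) (a i j₁) (wm i) (b i - m)
      (by push_cast; rw [hm]) (ha i j₂) (ha i j₁) (i ∈ Sbar)
      (by rw [hmem i]; constructor
          · rintro ⟨u, v, w⟩; exact ⟨v, u, by linarith⟩
          · rintro ⟨u, v, w⟩; exact ⟨v, u, by linarith⟩)
    have e1 : (b i : ℝ) - (sLHS a x i - a i j₁ + a i j₂)
        = (b i : ℝ) - sLHS a x i - a i j₂ + a i j₁ := by ring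
    have e2 : (b i : ℝ) - (sLHS a x i - a i j₁) = (b i : ℝ) - sLHS a x i + a i j₁ := by ring
    have e3 : (b i : ℝ) - (sLHS a x i + a i j₂) = (b i : ℝ) - sLHS a x i - a i j₂ := by ring
    rw [e1, e2, e3, hk]; ring
  unfold penObj
  simp only [hs1, hs2, hs12, hc1, hc2, hc12]
  rw [Hp, Hm]
  ring
end

section
/- Under the hypotheses of Lemma 1 (1-flip local optimality) and with x_{j₁} = 1, x_{j₂} = 0, if the simultaneous flip strictly improves, i.e., Δz̃_{j₁,j₂}(x) < 0, then the set S̄(x) = {i ∈ S_{j₁} ∩ S_{j₂} : s_i(x) = b_i} is nonempty and the total penalty weight over S̄(x), namely Σ_{i ∈ S̄(x)∩(M_L∪M_E)} w̃_i⁺ + Σ_{i ∈ S̄(x)∩(M_G∪M_E)} w̃_i⁻, is strictly positive. -/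
open scoped Classical BigOperators

lemma sum01 {N : Type*} [Fintype N] (f : N → ℝ) (h : ∀ j, f j = 0 ∨ f j = 1) :
    ∃ n : ℕ, ∑ j, f j = n := by
  classical
  refine ⟨(Finset.univ.filter fun j => f j = 1).card, ?_⟩
  rw [Finset.card_filter]
  push_cast
  refine Finset.sum_congr rfl fun j _ => ?_
  rcases h j with h' | h' <;> simp [h']

lemma sLHS_update {M N : Type*} [Fintype N] [DecidableEq N] (a : M → N → ℝ)
    (x : N → ℝ) (k : N) (v : ℝ) (i : M) :
    sLHS a (Function.update x k v) i = sLHS a x i + a i k * (v - x k) := by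
  unfold sLHS
  have h : ∀ j ∈ Finset.univ, a i j * Function.update x k v j
      = a i j * x j + (if j = k then a i k * (v - x k) else 0) := by
    intro j _
    by_cases hj : j = k
    · subst hj; rw [Function.update_self, if_pos rfl]; ring
    · simp [Function.update_of_ne hj, hj]
  rw [Finset.sum_congr rfl h, Finset.sum_add_distrib, Finset.sum_ite_eq' Finset.univ k]
  simp

theorem stmt_9 {M N : Type*} [Fintype M] [Fintype N] [DecidableEq N]
    (ML MG ME : Finset M) (a : M → N → ℝ) (b : M → ℕ) (c : N → ℝ)
    (wp wm : M → ℝ)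
    (ha : ∀ i j, a i j = 0 ∨ a i j = 1)
    (hwp : ∀ i, 0 ≤ wp i) (hwm : ∀ i, 0 ≤ wm i)
    (x : N → ℝ) (hx : ∀ j', x j' = 0 ∨ x j' = 1)
    (hlocal : ∀ j, 0 ≤ penObj ML MG ME a b c wp wm (flipVar x j) - penObj ML MG ME a b c wp wm x)
    (j₁ j₂ : N) (hne : j₁ ≠ j₂) (h1 : x j₁ = 1) (h2 : x j₂ = 0)
    (himp : penObj ML MG ME a b c wp wm (flipVar (flipVar x j₁) j₂)
        - penObj ML MG ME a b c wp wm x < 0) :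
    ((Sset a j₁ ∩ Sset a j₂).filter (fun i => sLHS a x i = (b i : ℝ))).Nonempty ∧
    0 < ∑ i ∈ ((Sset a j₁ ∩ Sset a j₂).filter (fun i => sLHS a x i = (b i : ℝ)))
          ∩ (ML ∪ ME), wp i
        + ∑ i ∈ ((Sset a j₁ ∩ Sset a j₂).filter (fun i => sLHS a x i = (b i : ℝ)))
          ∩ (MG ∪ ME), wm i := by
  classical
  set F : Finset M := (Sset a j₁ ∩ Sset a j₂).filter (fun i => sLHS a x i = (b i : ℝ))
    with hFdef
  have hFmem : ∀ i, i ∈ F ↔ (a i j₁ = 1 ∧ a i j₂ = 1 ∧ sLHS a x i = (b i : ℝ)) := by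
    intro i
    simp [hFdef, Sset, Finset.mem_filter, Finset.mem_inter, and_assoc]
  have hint : ∀ i, ∃ n : ℕ, sLHS a x i = n := by
    intro i
    unfold sLHS
    exact sum01 _ (fun j => by
      rcases ha i j with h | h <;> rcases hx j with h' | h' <;> simp [h, h'])
  have hs1 : ∀ i, sLHS a (flipVar x j₁) i = sLHS a x i - a i j₁ := by
    intro i
    simp only [flipVar]
    rw [sLHS_update, h1]; ring
  have hs2 : ∀ i, sLHS a (flipVar x j₂) i = sLHS a x i + a i j₂ := by
    intro i
    simp only [flipVar]
    rw [sLHS_update, h2]; ring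
  have hsy : ∀ i, sLHS a (flipVar (flipVar x j₁) j₂) i = sLHS a x i - a i j₁ + a i j₂ := by
    intro i
    simp only [flipVar]
    rw [sLHS_update, sLHS_update, h1, Function.update_of_ne (Ne.symm hne), h2]
    ring
  -- pointwise linear identity
  have hpt : ∀ j, c j * flipVar (flipVar x j₁) j₂ j + c j * x j
      - c j * flipVar x j₁ j - c j * flipVar x j₂ j = 0 := by
    intro j
    simp only [flipVar]
    by_cases hj2 : j = j₂
    · subst hj2
      simp only [Function.update_self, Function.update_of_ne (Ne.symm hne)]
      ring
    · by_cases hj1 : j = j₁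
      · subst hj1
        simp only [Function.update_of_ne hne, Function.update_self]
        ring
      · simp only [Function.update_of_ne hj2, Function.update_of_ne hj1]
        ring
  have hLsum : (∑ j, c j * flipVar (flipVar x j₁) j₂ j) + (∑ j, c j * x j)
      - (∑ j, c j * flipVar x j₁ j) - (∑ j, c j * flipVar x j₂ j) = 0 := by
    rw [← Finset.sum_add_distrib, ← Finset.sum_sub_distrib, ← Finset.sum_sub_distrib]
    exact Finset.sum_eq_zero fun j _ => hpt j
  -- per-constraint identity for the wp-penalties
  have hP : ∀ i, wp i * max (sLHS a (flipVar (flipVar x j₁) j₂) i - (b i : ℝ)) 0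
      + wp i * max (sLHS a x i - (b i : ℝ)) 0
      - wp i * max (sLHS a (flipVar x j₁) i - (b i : ℝ)) 0
      - wp i * max (sLHS a (flipVar x j₂) i - (b i : ℝ)) 0
      = if i ∈ F then -wp i else 0 := by
    intro i
    rw [hsy i, hs1 i, hs2 i]
    rcases ha i j₁ with hp | hp <;> rcases ha i j₂ with hq | hq
    · have hni : i ∉ F := fun hiF => by
        have := ((hFmem i).1 hiF).1; rw [hp] at this; norm_num at this
      rw [if_neg hni, hp, hq]
      simp only [sub_zero, add_zero]; ring
    · have hni : i ∉ F := fun hiF => by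
        have := ((hFmem i).1 hiF).1; rw [hp] at this; norm_num at this
      rw [if_neg hni, hp, hq]
      simp only [sub_zero, add_zero]; ring
    · have hni : i ∉ F := fun hiF => by
        have := ((hFmem i).1 hiF).2.1; rw [hq] at this; norm_num at this
      rw [if_neg hni, hp, hq]
      simp only [sub_zero, add_zero]; ring
    · rw [hp, hq,
        show sLHS a x i - 1 + 1 - (b i : ℝ) = sLHS a x i - (b i : ℝ) from by ring]
      obtain ⟨n, hn⟩ := hint i
      by_cases hb : sLHS a x i = (b i : ℝ)
      · rw [if_pos ((hFmem i).2 ⟨hp, hq, hb⟩), hb,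
          show (b i : ℝ) - b i = 0 from by ring,
          show (b i : ℝ) - 1 - b i = -1 from by ring,
          show (b i : ℝ) + 1 - b i = 1 from by ring]
        norm_num
      · rw [if_neg (fun hiF => hb ((hFmem i).1 hiF).2.2), hn]
        have hnb : n ≠ b i := fun h => hb (by rw [hn, h])
        rcases lt_or_gt_of_ne hnb with h | h
        · have hc : (n : ℝ) + 1 ≤ (b i : ℝ) := by exact_mod_cast h
          rw [max_eq_right (show (n : ℝ) - (b i : ℝ) ≤ 0 by linarith),
            max_eq_right (show (n : ℝ) - 1 - (b i : ℝ) ≤ 0 by linarith),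
            max_eq_right (show (n : ℝ) + 1 - (b i : ℝ) ≤ 0 by linarith)]
          ring
        · have hc : (b i : ℝ) + 1 ≤ (n : ℝ) := by exact_mod_cast h
          rw [max_eq_left (show (0:ℝ) ≤ (n : ℝ) - (b i : ℝ) by linarith),
            max_eq_left (show (0:ℝ) ≤ (n : ℝ) - 1 - (b i : ℝ) by linarith),
            max_eq_left (show (0:ℝ) ≤ (n : ℝ) + 1 - (b i : ℝ) by linarith)]
          ring
  -- per-constraint identity for the wm-penalties
  have hQ : ∀ i, wm i * max ((b i : ℝ) - sLHS a (flipVar (flipVar x j₁) j₂) i) 0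
      + wm i * max ((b i : ℝ) - sLHS a x i) 0
      - wm i * max ((b i : ℝ) - sLHS a (flipVar x j₁) i) 0
      - wm i * max ((b i : ℝ) - sLHS a (flipVar x j₂) i) 0
      = if i ∈ F then -wm i else 0 := by
    intro i
    rw [hsy i, hs1 i, hs2 i]
    rcases ha i j₁ with hp | hp <;> rcases ha i j₂ with hq | hq
    · have hni : i ∉ F := fun hiF => by
        have := ((hFmem i).1 hiF).1; rw [hp] at this; norm_num at this
      rw [if_neg hni, hp, hq]
      simp only [sub_zero, add_zero]; ring
    · have hni : i ∉ F := fun hiF => by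
        have := ((hFmem i).1 hiF).1; rw [hp] at this; norm_num at this
      rw [if_neg hni, hp, hq]
      simp only [sub_zero, add_zero]; ring
    · have hni : i ∉ F := fun hiF => by
        have := ((hFmem i).1 hiF).2.1; rw [hq] at this; norm_num at this
      rw [if_neg hni, hp, hq]
      simp only [sub_zero, add_zero]; ring
    · rw [hp, hq,
        show (b i : ℝ) - (sLHS a x i - 1 + 1) = (b i : ℝ) - sLHS a x i from by ring]
      obtain ⟨n, hn⟩ := hint i
      by_cases hb : sLHS a x i = (b i : ℝ)
      · rw [if_pos ((hFmem i).2 ⟨hp, hq, hb⟩), hb,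
          show (b i : ℝ) - b i = 0 from by ring,
          show (b i : ℝ) - ((b i : ℝ) - 1) = 1 from by ring,
          show (b i : ℝ) - ((b i : ℝ) + 1) = -1 from by ring]
        norm_num
      · rw [if_neg (fun hiF => hb ((hFmem i).1 hiF).2.2), hn]
        have hnb : n ≠ b i := fun h => hb (by rw [hn, h])
        rcases lt_or_gt_of_ne hnb with h | h
        · have hc : (n : ℝ) + 1 ≤ (b i : ℝ) := by exact_mod_cast h
          rw [max_eq_left (show (0:ℝ) ≤ (b i : ℝ) - (n : ℝ) by linarith),
            max_eq_left (show (0:ℝ) ≤ (b i : ℝ) - ((n : ℝ) - 1) by linarith),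
            max_eq_left (show (0:ℝ) ≤ (b i : ℝ) - ((n : ℝ) + 1) by linarith)]
          ring
        · have hc : (b i : ℝ) + 1 ≤ (n : ℝ) := by exact_mod_cast h
          rw [max_eq_right (show (b i : ℝ) - (n : ℝ) ≤ 0 by linarith),
            max_eq_right (show (b i : ℝ) - ((n : ℝ) - 1) ≤ 0 by linarith),
            max_eq_right (show (b i : ℝ) - ((n : ℝ) + 1) ≤ 0 by linarith)]
          ring
  have hPsum : (∑ i ∈ ML ∪ ME, wp i * max (sLHS a (flipVar (flipVar x j₁) j₂) i - (b i : ℝ)) 0)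
      + (∑ i ∈ ML ∪ ME, wp i * max (sLHS a x i - (b i : ℝ)) 0)
      - (∑ i ∈ ML ∪ ME, wp i * max (sLHS a (flipVar x j₁) i - (b i : ℝ)) 0)
      - (∑ i ∈ ML ∪ ME, wp i * max (sLHS a (flipVar x j₂) i - (b i : ℝ)) 0)
      = -∑ i ∈ F ∩ (ML ∪ ME), wp i := by
    rw [← Finset.sum_add_distrib, ← Finset.sum_sub_distrib, ← Finset.sum_sub_distrib,
      Finset.sum_congr rfl fun i _ => hP i]
    rw [Finset.sum_ite_mem, Finset.inter_comm, Finset.sum_neg_distrib]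
  have hQsum : (∑ i ∈ MG ∪ ME, wm i * max ((b i : ℝ) - sLHS a (flipVar (flipVar x j₁) j₂) i) 0)
      + (∑ i ∈ MG ∪ ME, wm i * max ((b i : ℝ) - sLHS a x i) 0)
      - (∑ i ∈ MG ∪ ME, wm i * max ((b i : ℝ) - sLHS a (flipVar x j₁) i) 0)
      - (∑ i ∈ MG ∪ ME, wm i * max ((b i : ℝ) - sLHS a (flipVar x j₂) i) 0)
      = -∑ i ∈ F ∩ (MG ∪ ME), wm i := by
    rw [← Finset.sum_add_distrib, ← Finset.sum_sub_distrib, ← Finset.sum_sub_distrib,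
      Finset.sum_congr rfl fun i _ => hQ i]
    rw [Finset.sum_ite_mem, Finset.inter_comm, Finset.sum_neg_distrib]
  have key : penObj ML MG ME a b c wp wm (flipVar (flipVar x j₁) j₂)
      + penObj ML MG ME a b c wp wm x
      - penObj ML MG ME a b c wp wm (flipVar x j₁)
      - penObj ML MG ME a b c wp wm (flipVar x j₂)
      = -((∑ i ∈ F ∩ (ML ∪ ME), wp i) + (∑ i ∈ F ∩ (MG ∪ ME), wm i)) := by
    simp only [penObj]
    linarith [hLsum, hPsum, hQsum]
  have hW : 0 < (∑ i ∈ F ∩ (ML ∪ ME), wp i) + (∑ i ∈ F ∩ (MG ∪ ME), wm i) := by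
    have d1 := hlocal j₁
    have d2 := hlocal j₂
    linarith [key, himp]
  refine ⟨?_, hW⟩
  rw [Finset.nonempty_iff_ne_empty]
  intro h
  rw [h] at hW
  simp at hW
end
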